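/- Fix m ≥ 2 and integers q, s ≥ 0, and set k := q + 2s and n := k·2^m. Let t, t_1, …, t_q be pairs in {0,1}^m × {0,1}^m, let λ_1, …, λ_k ∈ Fˣ, and let u := diag(λ_1, …, λ_k) ⊗ X_t (Kronecker product, an n×n matrix). If μ ∈ Fˣ satisfies λ_i² · β(t, t_i) = μ for i = 1, …, q and λ_{q+2j−1} · λ_{q+2j} = μ for j = 1, …, s, then det(u) = μ^{n/2}. -/

import Mathlib

open Matrix

/-- The 2×2 matrix `diag(-1, 1)`. -/
def Amat (F : Type*) [Field F] : Matrix (Fin 2) (Fin 2) F := !![-1, 0; 0, 1]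

/-- The 2×2 matrix interchanging the basis vectors. -/
def Bmat (F : Type*) [Field F] : Matrix (Fin 2) (Fin 2) F := !![0, 1; 1, 0]

/-- The generator `X_t` of the standard realization of the graded division algebra,
for `t = (x, y)`: the iterated Kronecker product of the matrices `A^{x_j} * B₀^{y_j}`. -/
def Xmat (F : Type*) [Field F] (m : ℕ) (x y : Fin m → ZMod 2) :
    Matrix (Fin m → Fin 2) (Fin m → Fin 2) F :=
  Matrix.of fun i k => ∏ j, (Amat F ^ (x j).val * Bmat F ^ (y j).val) (i j) (k j)

/-- The bicharacter value `β(t, t') = (-1)^{Σ_j (x_j y'_j + y_j x'_j)}`. -/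
def betaSign (F : Type*) [Field F] {m : ℕ}
    (t t' : (Fin m → ZMod 2) × (Fin m → ZMod 2)) : F :=
  (-1 : F) ^ (∑ j, (t.1 j * t'.2 j + t.2 j * t'.1 j) : ZMod 2).val

lemma det_AB_sq {F : Type*} [Field F] (a b : ℕ) :
    ((Amat F ^ a * Bmat F ^ b).det) ^ 2 = 1 := by
  have hA : (Amat F).det = -1 := by simp [Amat]
  have hB : (Bmat F).det = -1 := by simp [Bmat]
  rw [Matrix.det_mul, Matrix.det_pow, Matrix.det_pow, hA, hB, mul_pow,
    ← pow_mul, ← pow_mul, mul_comm a 2, mul_comm b 2, pow_mul, pow_mul]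
  simp

lemma betaSign_sq {F : Type*} [Field F] {m : ℕ}
    (t t' : (Fin m → ZMod 2) × (Fin m → ZMod 2)) : (betaSign F t t') ^ 2 = 1 := by
  unfold betaSign
  rw [← pow_mul, mul_comm, pow_mul]
  simp

lemma Xmat_succ_det {F : Type*} [Field F] (m : ℕ) (x y : Fin (m + 1) → ZMod 2) :
    (Xmat F (m + 1) x y).det =
      ((Amat F ^ (x 0).val * Bmat F ^ (y 0).val).det) ^ (2 ^ m) *
        (Xmat F m (x ∘ Fin.succ) (y ∘ Fin.succ)).det ^ 2 := by
  have h : Xmat F (m + 1) x y =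
      (Matrix.kroneckerMap (· * ·) (Amat F ^ (x 0).val * Bmat F ^ (y 0).val)
          (Xmat F m (x ∘ Fin.succ) (y ∘ Fin.succ))).submatrix
        (Fin.consEquiv fun _ => Fin 2).symm (Fin.consEquiv fun _ => Fin 2).symm := by
    ext i k
    simp only [Xmat, Matrix.submatrix_apply, Matrix.kroneckerMap_apply, Matrix.of_apply,
      Fin.consEquiv_symm_apply, Fin.prod_univ_succ, Function.comp_apply]
    rfl
  rw [h, Matrix.det_submatrix_equiv_self, Matrix.det_kronecker]
  simp [Fintype.card_fun]

lemma Xmat_det_sq {F : Type*} [Field F] :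
    ∀ (m : ℕ) (x y : Fin m → ZMod 2), (Xmat F m x y).det ^ 2 = 1
  | 0, x, y => by
      rw [Matrix.det_unique]
      simp [Xmat]
  | (m + 1), x, y => by
      have h1 := det_AB_sq (F := F) (x 0).val (y 0).val
      have h2 := Xmat_det_sq (F := F) m (x ∘ Fin.succ) (y ∘ Fin.succ)
      rw [Xmat_succ_det]
      have heq : (((Amat F ^ (x 0).val * Bmat F ^ (y 0).val).det) ^ (2 ^ m) *
          (Xmat F m (x ∘ Fin.succ) (y ∘ Fin.succ)).det ^ 2) ^ 2 =
          (((Amat F ^ (x 0).val * Bmat F ^ (y 0).val).det) ^ 2) ^ (2 ^ m) *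
            ((Xmat F m (x ∘ Fin.succ) (y ∘ Fin.succ)).det ^ 2) ^ 2 := by ring
      rw [heq, h1, h2]
      simp

lemma Xmat_det_one {F : Type*} [Field F] (m : ℕ) (hm : 2 ≤ m) (x y : Fin m → ZMod 2) :
    (Xmat F m x y).det = 1 := by
  obtain ⟨n, rfl⟩ : ∃ n, m = n + 1 + 1 := ⟨m - 2, by omega⟩
  rw [Xmat_succ_det, Xmat_det_sq, mul_one,
    show (2 : ℕ) ^ (n + 1) = 2 * 2 ^ n by ring, pow_mul,
    det_AB_sq, one_pow]

lemma prod_range_two_mul {M : Type*} [CommMonoid M] (s : ℕ) (f : ℕ → M) :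
    ∏ i ∈ Finset.range (2 * s), f i = ∏ j ∈ Finset.range s, (f (2 * j) * f (2 * j + 1)) := by
  induction s with
  | zero => simp
  | succ n ih =>
      rw [show 2 * (n + 1) = 2 * n + 1 + 1 by ring, Finset.prod_range_succ,
        Finset.prod_range_succ, Finset.prod_range_succ, ih, mul_assoc]

/-- For `m ≥ 2`, the determinant of `u = diag(λ_1, …, λ_k) ⊗ X_t` equals `μ^{n/2}`. -/
theorem stmt13 {F : Type*} [Field F] (hF : (2 : F) ≠ 0) (m : ℕ) (hm : 2 ≤ m) (q s : ℕ)
    (t : (Fin m → ZMod 2) × (Fin m → ZMod 2))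
    (ts : Fin q → (Fin m → ZMod 2) × (Fin m → ZMod 2))
    (lam : Fin (q + 2 * s) → Fˣ) (μ : Fˣ)
    (hμq : ∀ i : Fin q, ((lam (Fin.castAdd (2 * s) i) : F)) ^ 2 * betaSign F t (ts i) = (μ : F))
    (hμs : ∀ j : Fin s,
      ((lam ⟨q + 2 * (j : ℕ), by have := j.isLt; omega⟩ : F))
        * ((lam ⟨q + 2 * (j : ℕ) + 1, by have := j.isLt; omega⟩ : F)) = (μ : F)) :
    (Matrix.kroneckerMap (· * ·) (Matrix.diagonal fun i => ((lam i : F)))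
        (Xmat F m t.1 t.2)).det
      = (μ : F) ^ ((q + 2 * s) * 2 ^ m / 2) := by
  classical
  obtain ⟨p, rfl⟩ : ∃ p, m = p + 2 := ⟨m - 2, by omega⟩
  rw [Matrix.det_kronecker, Matrix.det_diagonal, Xmat_det_one _ hm, one_pow, mul_one,
    show Fintype.card (Fin (p + 2) → Fin 2) = 2 ^ (p + 2) by simp,
    show (q + 2 * s) * 2 ^ (p + 2) / 2 = (q + 2 * s) * 2 ^ (p + 1) by
      rw [pow_succ, ← mul_assoc, Nat.mul_div_cancel _ two_pos]]
  -- transfer to a product over ℕ ranges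
  set g : ℕ → F := fun i => if h : i < q + 2 * s then (lam ⟨i, h⟩ : F) else 1 with hg
  have hgen : ∀ (i : ℕ) (h : i < q + 2 * s), g i = (lam ⟨i, h⟩ : F) := fun i h => dif_pos h
  have hprod : (∏ i : Fin (q + 2 * s), (lam i : F)) = ∏ i ∈ Finset.range (q + 2 * s), g i := by
    rw [← Fin.prod_univ_eq_prod_range g]
    exact Finset.prod_congr rfl fun i _ => (hgen i.val i.isLt).symm
  rw [hprod, Finset.prod_range_add, mul_pow]
  have hA : (∏ i ∈ Finset.range q, g i) ^ (2 ^ (p + 2)) = (μ : F) ^ (q * 2 ^ (p + 1)) := by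
    rw [← Finset.prod_pow]
    have hterm : ∀ i ∈ Finset.range q, g i ^ 2 ^ (p + 2) = (μ : F) ^ (2 ^ (p + 1)) := by
      intro i hi
      rw [Finset.mem_range] at hi
      have hlt : i < q + 2 * s := by omega
      have h1 := hμq ⟨i, hi⟩
      have hcast : (lam (Fin.castAdd (2 * s) ⟨i, hi⟩) : F) = (lam ⟨i, hlt⟩ : F) := rfl
      rw [hcast] at h1
      set β := betaSign F t (ts ⟨i, hi⟩) with hβ
      have hβ2 : β ^ 2 = 1 := betaSign_sq _ _
      have hsq : (lam ⟨i, hlt⟩ : F) ^ 2 = (μ : F) * β := by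
        have := congrArg (· * β) h1
        simp only [mul_assoc, ← sq, hβ2, mul_one] at this
        exact this
      rw [hgen i hlt, show (2 : ℕ) ^ (p + 2) = 2 * 2 ^ (p + 1) by ring, pow_mul, hsq,
        mul_pow, show (2 : ℕ) ^ (p + 1) = 2 * 2 ^ p by ring, pow_mul β, hβ2, one_pow, mul_one]
    rw [Finset.prod_congr rfl hterm, Finset.prod_const, Finset.card_range, ← pow_mul,
      mul_comm (2 ^ (p + 1)) q]
  have hB : (∏ i ∈ Finset.range (2 * s), g (q + i)) ^ (2 ^ (p + 2))
      = (μ : F) ^ ((2 * s) * 2 ^ (p + 1)) := by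
    have hpairs : (∏ i ∈ Finset.range (2 * s), g (q + i)) = (μ : F) ^ s := by
      rw [prod_range_two_mul]
      have hterm : ∀ j ∈ Finset.range s, g (q + 2 * j) * g (q + (2 * j + 1)) = (μ : F) := by
        intro j hj
        rw [Finset.mem_range] at hj
        have h1 : q + 2 * j < q + 2 * s := by omega
        have h2 : q + (2 * j + 1) < q + 2 * s := by omega
        rw [hgen _ h1, hgen _ h2]
        exact hμs ⟨j, hj⟩
      rw [Finset.prod_congr rfl hterm, Finset.prod_const, Finset.card_range]
    rw [hpairs, ← pow_mul]
    congr 1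
    ring
  rw [hA, hB, ← pow_add]
  congr 1
  ring
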